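/- The central binomial-trinomial coefficients T(n) = [X^n](1+X+X^2)^n satisfy the sandwich inequality: for every n ≥ 2 and every 0 ≤ k ≤ n-1, T(n-1)·1 < T(n) + 2·[X^{n-k}](1+X+X^2)^n ≤ 3·T(n), where T(m) here denotes [X^m](1+X+X^2)^m; equivalently 1 < |E(SSB(n,k))|/|E(Δ_{n-1})| ≤ 3. -/

import Mathlib

/-- Ewald set of SSB(n,k). -/
def ssbEwald (n k : ℕ) (h : 0 < n) : Set (Fin n → ℤ) :=
  {x | ((∀ i, -1 ≤ x i) ∧ x ⟨0, h⟩ ≤ 1 ∧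
          (k : ℤ) * x ⟨0, h⟩ + ∑ i ∈ Finset.univ.erase ⟨0, h⟩, x i ≤ 1) ∧
       ((∀ i, -1 ≤ -(x i)) ∧ -(x ⟨0, h⟩) ≤ 1 ∧
          (k : ℤ) * (-(x ⟨0, h⟩)) + ∑ i ∈ Finset.univ.erase ⟨0, h⟩, -(x i) ≤ 1)}

/-- Ewald set of the monotone simplex Δ_m. -/
def simplexEwald (m : ℕ) : Set (Fin m → ℤ) :=
  {x | ((∀ i, -1 ≤ x i) ∧ ∑ i, x i ≤ 1) ∧ ((∀ i, -1 ≤ -(x i)) ∧ ∑ i, -(x i) ≤ 1)}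

def cnt : ℕ → ℤ → ℕ
  | 0, s => if s = 0 then 1 else 0
  | m + 1, s => cnt m (s - 1) + cnt m s + cnt m (s + 1)

lemma cnt_succ (m : ℕ) (s : ℤ) : cnt (m + 1) s = cnt m (s - 1) + cnt m s + cnt m (s + 1) := rfl

lemma cnt_symm (m : ℕ) (s : ℤ) : cnt m (-s) = cnt m s := by
  induction m generalizing s with
  | zero => simp [cnt, neg_eq_zero]
  | succ m ih =>
    rw [cnt_succ, cnt_succ, show -s - 1 = -(s + 1) by ring, show -s + 1 = -(s - 1) by ring,
      ih, ih, ih]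
    omega

lemma cnt_step (m : ℕ) (s : ℤ) (hs : 0 ≤ s) : cnt m (s + 1) ≤ cnt m s := by
  induction m generalizing s with
  | zero => simp only [cnt, show s + 1 ≠ 0 by omega, if_false]; positivity
  | succ m ih =>
    rw [cnt_succ, cnt_succ, show s + 1 - 1 = s by ring]
    have h2 : cnt m (s + 1 + 1) ≤ cnt m (s - 1) := by
      rcases eq_or_lt_of_le hs with h | h
      · have e : s - 1 = -(1 + 1) + 1 := by omega
        have e2 : cnt m (s - 1) = cnt m 1 := by
          rw [show s - 1 = -1 by omega, show (-1 : ℤ) = -(1:ℤ) by ring, cnt_symm]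
        rw [e2, show s + 1 + 1 = 1 + 1 by omega]
        exact ih 1 (by omega)
      · calc cnt m (s + 1 + 1) ≤ cnt m (s + 1) := ih (s + 1) (by omega)
          _ ≤ cnt m s := ih s hs
          _ ≤ cnt m (s - 1) := by
              have := ih (s - 1) (by omega)
              rwa [show s - 1 + 1 = s by ring] at this
    have h3 := ih s hs
    omega

lemma cnt_anti (m : ℕ) {a b : ℤ} (ha : 0 ≤ a) (hab : a ≤ b) : cnt m b ≤ cnt m a :=
  Int.le_induction (motive := fun t _ => cnt m t ≤ cnt m a) le_rfl
    (fun t ht ih => le_trans (cnt_step m t (ha.trans ht)) ih) b hab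

lemma cnt_pos (m : ℕ) (s : ℤ) (hs : s.natAbs ≤ m) : 1 ≤ cnt m s := by
  induction m generalizing s with
  | zero => simp [cnt, show s = 0 by omega]
  | succ m ih =>
    rw [cnt_succ]
    rcases lt_trichotomy s 0 with h | h | h
    · have := ih (s + 1) (by omega)
      omega
    · have := ih s (by omega)
      omega
    · have := ih (s - 1) (by omega)
      omega

noncomputable def triF (m : ℕ) : Finset (Fin m → ℤ) := Fintype.piFinset fun _ => Finset.Icc (-1) 1

noncomputable def A (m : ℕ) (s : ℤ) : Finset (Fin m → ℤ) := (triF m).filter fun y => ∑ i, y i = s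

lemma icc_expand : Finset.Icc (-1 : ℤ) 1 = {-1, 0, 1} := by decide

lemma cardA (m : ℕ) (s : ℤ) : (A m s).card = cnt m s := by
  induction m generalizing s with
  | zero =>
    rcases eq_or_ne s 0 with h | h
    · subst h
      have : A 0 0 = triF 0 := by
        apply Finset.filter_true_of_mem
        intro x _
        simp
      rw [this]
      simp [triF, cnt, Fintype.card_piFinset]
    · have : A 0 s = ∅ := by
        apply Finset.filter_false_of_mem
        intro x _
        simp [h]
        omega
      simp [this, cnt, h]
  | succ m ih =>
    have hA : A (m + 1) s
        = (Finset.Icc (-1 : ℤ) 1).biUnion fun c => (A m (s - c)).image (fun y : Fin m → ℤ => (Fin.cons c y : Fin (m + 1) → ℤ)) := by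
      ext x
      simp only [A, Finset.mem_filter, Finset.mem_biUnion, Finset.mem_image, triF,
        Fintype.mem_piFinset, Finset.mem_Icc]
      constructor
      · rintro ⟨hmem, hsum⟩
        refine ⟨x 0, hmem 0, Fin.tail x, ⟨⟨fun i => hmem i.succ, ?_⟩, Fin.cons_self_tail x⟩⟩
        have := Fin.sum_univ_succ x
        simp only [Fin.tail]
        omega
      · rintro ⟨c, hc, y, ⟨⟨hy, hsum⟩, rfl⟩⟩
        constructor
        · intro i
          refine Fin.cases ?_ ?_ i
          · simpa using hc
          · intro j; simpa using hy j
        · rw [Fin.sum_univ_succ]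
          simp only [Fin.cons_zero, Fin.cons_succ]
          omega
    rw [hA, Finset.card_biUnion]
    · have himg : ∀ c : ℤ, ((A m (s - c)).image (fun y : Fin m → ℤ => (Fin.cons c y : Fin (m + 1) → ℤ))).card = cnt m (s - c) := by
        intro c
        rw [Finset.card_image_of_injective _ (Fin.cons_right_injective (α := fun _ : Fin (m+1) => ℤ) c), ih]
      rw [icc_expand]
      rw [Finset.sum_insert (by decide), Finset.sum_insert (by decide), Finset.sum_singleton]
      rw [himg, himg, himg, cnt_succ]
      rw [show s - -1 = s + 1 by ring, show s - 0 = s by ring]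
      omega
    · intro c hc d hd hcd
      simp only [Finset.disjoint_left, Finset.mem_image]
      rintro x ⟨y, _, rfl⟩ ⟨z, _, hz⟩
      apply hcd
      have := congrFun hz 0
      simpa using this.symm

noncomputable def B (m : ℕ) (lo hi : ℤ) : Finset (Fin m → ℤ) :=
  (triF m).filter fun y => lo ≤ ∑ i, y i ∧ ∑ i, y i ≤ hi

lemma cardB (m : ℕ) (a : ℤ) :
    (B m (a - 1) (a + 1)).card = cnt m (a - 1) + cnt m a + cnt m (a + 1) := by
  have hB : B m (a - 1) (a + 1) = (Finset.Icc (a - 1) (a + 1)).biUnion (A m) := by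
    ext x
    simp only [B, A, Finset.mem_filter, Finset.mem_biUnion, Finset.mem_Icc]
    constructor
    · rintro ⟨hx, h1, h2⟩
      exact ⟨∑ i, x i, ⟨h1, h2⟩, hx, rfl⟩
    · rintro ⟨s, ⟨h1, h2⟩, hx, rfl⟩
      exact ⟨hx, h1, h2⟩
  rw [hB, Finset.card_biUnion]
  · rw [show Finset.Icc (a - 1) (a + 1) = {a - 1, a, a + 1} by
      ext t; simp only [Finset.mem_Icc, Finset.mem_insert, Finset.mem_singleton]; omega]
    rw [Finset.sum_insert (by simp; omega), Finset.sum_insert (by simp),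
      Finset.sum_singleton, cardA, cardA, cardA]
    ring
  · intro s hs t ht hst
    simp only [Finset.disjoint_left, A, Finset.mem_filter]
    rintro x ⟨_, h1⟩ ⟨_, h2⟩
    exact hst (h1 ▸ h2 ▸ rfl)

lemma simplex_card (m : ℕ) :
    (simplexEwald m).ncard = cnt m (-1) + cnt m 0 + cnt m 1 := by
  have hset : simplexEwald m = ↑(B m (0 - 1) (0 + 1)) := by
    ext x
    simp only [simplexEwald, Set.mem_setOf_eq, Finset.mem_coe, B, Finset.mem_filter, triF,
      Fintype.mem_piFinset, Finset.mem_Icc, Finset.sum_neg_distrib]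
    constructor
    · rintro ⟨⟨h1, h2⟩, h3, h4⟩
      exact ⟨fun i => ⟨h1 i, by linarith [h3 i]⟩, by linarith, by linarith⟩
    · rintro ⟨h1, h2, h3⟩
      exact ⟨⟨fun i => (h1 i).1, by linarith⟩, fun i => by linarith [(h1 i).2], by linarith⟩
  rw [hset, Set.ncard_coe_finset, cardB m 0]
  norm_num

lemma erase_sum (m : ℕ) (x : Fin (m + 1) → ℤ) :
    ∑ i ∈ Finset.univ.erase (0 : Fin (m + 1)), x i = ∑ i : Fin m, x i.succ := by
  have h1 := Finset.add_sum_erase Finset.univ x (Finset.mem_univ (0 : Fin (m + 1)))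
  have h2 := Fin.sum_univ_succ x
  omega

lemma ssb_card (m k : ℕ) (h : 0 < m + 1) :
    (ssbEwald (m + 1) k h).ncard
      = (cnt m (-(k : ℤ) * -1 - 1) + cnt m (-(k : ℤ) * -1) + cnt m (-(k : ℤ) * -1 + 1))
        + ((cnt m (-(k : ℤ) * 0 - 1) + cnt m (-(k : ℤ) * 0) + cnt m (-(k : ℤ) * 0 + 1))
        + (cnt m (-(k : ℤ) * 1 - 1) + cnt m (-(k : ℤ) * 1) + cnt m (-(k : ℤ) * 1 + 1))) := by
  have h0 : (⟨0, h⟩ : Fin (m + 1)) = 0 := rfl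
  have hset : ssbEwald (m + 1) k h
      = ↑((Finset.Icc (-1 : ℤ) 1).biUnion fun c =>
          (B m (-(k : ℤ) * c - 1) (-(k : ℤ) * c + 1)).image
            fun y : Fin m → ℤ => (Fin.cons c y : Fin (m + 1) → ℤ)) := by
    ext x
    simp only [ssbEwald, Set.mem_setOf_eq, h0, Finset.mem_coe, Finset.mem_biUnion,
      Finset.mem_image, B, Finset.mem_filter, triF, Fintype.mem_piFinset, Finset.mem_Icc,
      Finset.sum_neg_distrib, erase_sum]
    constructor
    · rintro ⟨⟨h1, h2, h3⟩, h4, h5, h6⟩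
      refine ⟨x 0, ⟨h1 0, h2⟩, Fin.tail x,
        ⟨⟨fun i => ⟨h1 i.succ, show x i.succ ≤ 1 by linarith [h4 i.succ]⟩, ?_, ?_⟩,
          Fin.cons_self_tail x⟩⟩
      · simp only [Fin.tail]; linarith
      · simp only [Fin.tail]; linarith
    · rintro ⟨c, ⟨hc1, hc2⟩, y, ⟨⟨hy, hlo, hhi⟩, rfl⟩⟩
      have hz : (Fin.cons c y : Fin (m + 1) → ℤ) 0 = c := rfl
      have hsucc : ∀ i : Fin m, (Fin.cons c y : Fin (m + 1) → ℤ) i.succ = y i :=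
        fun i => by simp
      have hall : ∀ i, -1 ≤ (Fin.cons c y : Fin (m + 1) → ℤ) i ∧
          (Fin.cons c y : Fin (m + 1) → ℤ) i ≤ 1 := by
        intro i
        refine Fin.cases ?_ ?_ i
        · rw [hz]; exact ⟨hc1, hc2⟩
        · intro j; rw [hsucc]; exact ⟨(hy j).1, (hy j).2⟩
      have hsum : ∑ i : Fin m, (Fin.cons c y : Fin (m + 1) → ℤ) i.succ = ∑ i, y i := by
        exact Finset.sum_congr rfl fun i _ => hsucc i
      rw [hz, hsum]
      exact ⟨⟨fun i => (hall i).1, hc2, by linarith⟩,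
        fun i => by linarith [(hall i).2], by linarith, by linarith⟩
  rw [hset, Set.ncard_coe_finset, Finset.card_biUnion]
  · rw [icc_expand, Finset.sum_insert (by decide), Finset.sum_insert (by decide),
      Finset.sum_singleton]
    rw [Finset.card_image_of_injective _ (Fin.cons_right_injective (α := fun _ : Fin (m+1) => ℤ) (-1 : ℤ)),
      Finset.card_image_of_injective _ (Fin.cons_right_injective (α := fun _ : Fin (m+1) => ℤ) (0 : ℤ)),
      Finset.card_image_of_injective _ (Fin.cons_right_injective (α := fun _ : Fin (m+1) => ℤ) (1 : ℤ)),
      cardB, cardB, cardB]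
  · intro c hc d hd hcd
    simp only [Finset.disjoint_left, Finset.mem_image]
    rintro x ⟨y, _, rfl⟩ ⟨z, _, hz⟩
    apply hcd
    have := congrFun hz 0
    simpa using this.symm

/-- Sandwich inequality: |E(Δ_{n-1})| < |E(SSB(n,k))| ≤ 3|E(Δ_{n-1})|,
i.e. the ratio lies in (1,3]. -/
theorem ewald_SSB_sandwich (n k : ℕ) (hn : 2 ≤ n) (hk : k ≤ n - 1) :
    (simplexEwald (n - 1)).ncard < (ssbEwald n k (by omega)).ncard ∧
      (ssbEwald n k (by omega)).ncard ≤ 3 * (simplexEwald (n - 1)).ncard := by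
  obtain ⟨m, rfl⟩ : ∃ m, n = m + 1 := ⟨n - 1, by omega⟩
  have hk' : k ≤ m := by omega
  simp only [Nat.succ_sub_one]
  rw [simplex_card, ssb_card]
  set K := (k : ℤ) with hKdef
  have e1 : cnt m (-K * -1 - 1) = cnt m (K - 1) := by rw [show -K * -1 - 1 = K - 1 by ring]
  have e2 : cnt m (-K * -1) = cnt m K := by rw [show -K * -1 = K by ring]
  have e3 : cnt m (-K * -1 + 1) = cnt m (K + 1) := by rw [show -K * -1 + 1 = K + 1 by ring]
  have e4 : cnt m (-K * 0 - 1) = cnt m 1 := by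
    rw [show -K * 0 - 1 = -(1 : ℤ) by ring, cnt_symm]
  have e5 : cnt m (-K * 0) = cnt m 0 := by rw [show -K * 0 = 0 by ring]
  have e6 : cnt m (-K * 0 + 1) = cnt m 1 := by rw [show -K * 0 + 1 = 1 by ring]
  have e7 : cnt m (-K * 1 - 1) = cnt m (K + 1) := by
    rw [show -K * 1 - 1 = -(K + 1) by ring, cnt_symm]
  have e8 : cnt m (-K * 1) = cnt m K := by rw [show -K * 1 = -K by ring, cnt_symm]
  have e9 : cnt m (-K * 1 + 1) = cnt m (K - 1) := by
    rw [show -K * 1 + 1 = -(K - 1) by ring, cnt_symm]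
  have e10 : cnt m (-1 : ℤ) = cnt m 1 := by rw [show (-1 : ℤ) = -(1 : ℤ) by ring, cnt_symm]
  rw [e1, e2, e3, e4, e5, e6, e7, e8, e9, e10]
  have hpos : 1 ≤ cnt m K := cnt_pos m K (by simp only [hKdef, Int.natAbs_natCast]; exact hk')
  have hub : cnt m (K - 1) + cnt m K + cnt m (K + 1) ≤ cnt m 0 + 2 * cnt m 1 := by
    rcases Nat.eq_zero_or_pos k with h | h
    · have hK : K = 0 := by simp [hKdef, h]
      rw [hK, show (0 : ℤ) - 1 = -(1 : ℤ) by ring, cnt_symm, show (0 : ℤ) + 1 = 1 by ring]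
      omega
    · have hK1 : (1 : ℤ) ≤ K := by omega
      have b1 : cnt m (K - 1) ≤ cnt m 0 := cnt_anti m le_rfl (by omega)
      have b2 : cnt m K ≤ cnt m 1 := cnt_anti m (by norm_num) hK1
      have b3 : cnt m (K + 1) ≤ cnt m 1 := cnt_anti m (by norm_num) (by omega)
      omega
  constructor <;> omega
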